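/- In the subring 𝒜 = 𝔽_q[x, y] of 𝔽_q(t) (where x = 1/π and y = t/π), let I_∞ be the ideal generated by x and y, and let I_0 be the ideal generated by x − ζ^{−(q+1)} and y (note ζ^{q+1} ∈ 𝔽_q^×, so ζ^{−(q+1)} ∈ 𝔽_q). Then I_∞² = (x) and I_0 · I_∞ = (y) as ideals of 𝒜. -/

import Mathlib

section
variable {K : Type*} [Field K] (a b : K)

private lemma pi_ne_zero : (RatFunc.X ^ 2 - RatFunc.C a * RatFunc.X + RatFunc.C b : RatFunc K) ≠ 0 := by
  have h : (RatFunc.X ^ 2 - RatFunc.C a * RatFunc.X + RatFunc.C b : RatFunc K)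
      = algebraMap (Polynomial K) (RatFunc K)
        (Polynomial.X ^ 2 - Polynomial.C a * Polynomial.X + Polynomial.C b) := by
    simp [RatFunc.algebraMap_C, RatFunc.algebraMap_X]
  rw [h]
  apply RatFunc.algebraMap_ne_zero
  intro hp
  have := congrArg (fun p => Polynomial.coeff p 2) hp
  simp [Polynomial.coeff_X_pow, Polynomial.coeff_C] at this

private lemma L1 :
    RatFunc.X * (RatFunc.X ^ 2 - RatFunc.C a * RatFunc.X + RatFunc.C b : RatFunc K)⁻¹ *
      (RatFunc.X * (RatFunc.X ^ 2 - RatFunc.C a * RatFunc.X + RatFunc.C b)⁻¹) =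
    (RatFunc.X ^ 2 - RatFunc.C a * RatFunc.X + RatFunc.C b)⁻¹ *
      (1 + RatFunc.C a * (RatFunc.X * (RatFunc.X ^ 2 - RatFunc.C a * RatFunc.X + RatFunc.C b)⁻¹)
        - RatFunc.C b * (RatFunc.X ^ 2 - RatFunc.C a * RatFunc.X + RatFunc.C b)⁻¹) := by
  have hπ := pi_ne_zero a b (K := K)
  have key : (RatFunc.X ^ 2 - RatFunc.C a * RatFunc.X + RatFunc.C b : RatFunc K) * (RatFunc.X ^ 2 - RatFunc.C a * RatFunc.X + RatFunc.C b : RatFunc K)⁻¹ = 1 := mul_inv_cancel₀ hπ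
  linear_combination (RatFunc.X ^ 2 - RatFunc.C a * RatFunc.X + RatFunc.C b : RatFunc K)⁻¹ * key

private lemma L2 :
    (RatFunc.X ^ 2 - RatFunc.C a * RatFunc.X + RatFunc.C b : RatFunc K)⁻¹ =
    RatFunc.X * (RatFunc.X ^ 2 - RatFunc.C a * RatFunc.X + RatFunc.C b)⁻¹ *
      (RatFunc.X * (RatFunc.X ^ 2 - RatFunc.C a * RatFunc.X + RatFunc.C b)⁻¹)
    - RatFunc.C a * ((RatFunc.X ^ 2 - RatFunc.C a * RatFunc.X + RatFunc.C b)⁻¹ *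
        (RatFunc.X * (RatFunc.X ^ 2 - RatFunc.C a * RatFunc.X + RatFunc.C b)⁻¹))
    + RatFunc.C b * ((RatFunc.X ^ 2 - RatFunc.C a * RatFunc.X + RatFunc.C b)⁻¹ *
        (RatFunc.X ^ 2 - RatFunc.C a * RatFunc.X + RatFunc.C b)⁻¹) := by
  have hπ := pi_ne_zero a b (K := K)
  have key : (RatFunc.X ^ 2 - RatFunc.C a * RatFunc.X + RatFunc.C b : RatFunc K) * (RatFunc.X ^ 2 - RatFunc.C a * RatFunc.X + RatFunc.C b : RatFunc K)⁻¹ = 1 := mul_inv_cancel₀ hπ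
  linear_combination (-(RatFunc.X ^ 2 - RatFunc.C a * RatFunc.X + RatFunc.C b : RatFunc K)⁻¹) * key

private lemma L3 (hb : b ≠ 0) :
    ((RatFunc.X ^ 2 - RatFunc.C a * RatFunc.X + RatFunc.C b : RatFunc K)⁻¹ - RatFunc.C b⁻¹) *
      (RatFunc.X ^ 2 - RatFunc.C a * RatFunc.X + RatFunc.C b)⁻¹ =
    RatFunc.X * (RatFunc.X ^ 2 - RatFunc.C a * RatFunc.X + RatFunc.C b)⁻¹ *
      (RatFunc.C b⁻¹ * (RatFunc.C a * (RatFunc.X ^ 2 - RatFunc.C a * RatFunc.X + RatFunc.C b)⁻¹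
        - RatFunc.X * (RatFunc.X ^ 2 - RatFunc.C a * RatFunc.X + RatFunc.C b)⁻¹)) := by
  have hπ := pi_ne_zero a b (K := K)
  have hb' : (RatFunc.C b : RatFunc K) ≠ 0 := by simpa using hb
  rw [map_inv₀]
  have key : (RatFunc.X ^ 2 - RatFunc.C a * RatFunc.X + RatFunc.C b : RatFunc K) * (RatFunc.X ^ 2 - RatFunc.C a * RatFunc.X + RatFunc.C b : RatFunc K)⁻¹ = 1 := mul_inv_cancel₀ hπ
  have keyb : (RatFunc.C b : RatFunc K) * (RatFunc.C b)⁻¹ = 1 := mul_inv_cancel₀ hb'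
  linear_combination (-(RatFunc.X ^ 2 - RatFunc.C a * RatFunc.X + RatFunc.C b : RatFunc K)⁻¹ ^ 2) * keyb + ((RatFunc.C b : RatFunc K)⁻¹ * (RatFunc.X ^ 2 - RatFunc.C a * RatFunc.X + RatFunc.C b : RatFunc K)⁻¹) * key

private lemma L4 (hb : b ≠ 0) :
    RatFunc.X * (RatFunc.X ^ 2 - RatFunc.C a * RatFunc.X + RatFunc.C b : RatFunc K)⁻¹ =
    RatFunc.C b * (RatFunc.X * (RatFunc.X ^ 2 - RatFunc.C a * RatFunc.X + RatFunc.C b)⁻¹ *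
      (RatFunc.X ^ 2 - RatFunc.C a * RatFunc.X + RatFunc.C b)⁻¹)
    - RatFunc.C b * (((RatFunc.X ^ 2 - RatFunc.C a * RatFunc.X + RatFunc.C b)⁻¹ - RatFunc.C b⁻¹) *
      (RatFunc.X * (RatFunc.X ^ 2 - RatFunc.C a * RatFunc.X + RatFunc.C b)⁻¹)) := by
  have hπ := pi_ne_zero a b (K := K)
  have hb' : (RatFunc.C b : RatFunc K) ≠ 0 := by simpa using hb
  rw [map_inv₀]
  have keyb : (RatFunc.C b : RatFunc K) * (RatFunc.C b)⁻¹ = 1 := mul_inv_cancel₀ hb'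
  linear_combination (-(RatFunc.X * (RatFunc.X ^ 2 - RatFunc.C a * RatFunc.X + RatFunc.C b : RatFunc K)⁻¹)) * keyb

end

set_option maxHeartbeats 4000000 in
set_option synthInstance.maxHeartbeats 1000000 in
/-- In `𝒜 = 𝔽_q[x,y] ⊆ 𝔽_q(t)` (with `x = 1/π`, `y = t/π`) one has
`I_∞² = (x)` and `I_0 · I_∞ = (y)`. -/
theorem stmt1 {Fq E : Type*} [Field Fq] [Fintype Fq] [Field E] [Algebra Fq E]
    (q : ℕ) (hq : Fintype.card Fq = q)
    (ζ : E) (hζ : ζ ^ q ≠ ζ) (hζ2 : ζ ^ q ^ 2 = ζ)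
    (a b : Fq) (ha : algebraMap Fq E a = ζ + ζ ^ q) (hb : algebraMap Fq E b = ζ ^ (q + 1)) :
    let x : RatFunc Fq := (RatFunc.X ^ 2 - RatFunc.C a * RatFunc.X + RatFunc.C b)⁻¹
    let y : RatFunc Fq := RatFunc.X * x
    let A : Subalgebra Fq (RatFunc Fq) := Algebra.adjoin Fq {x, y}
    let xA : A := ⟨x, Algebra.subset_adjoin (Set.mem_insert _ _)⟩
    let yA : A := ⟨y, Algebra.subset_adjoin (Set.mem_insert_of_mem _ rfl)⟩
    let cA : A := algebraMap Fq A b⁻¹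
    Ideal.span {xA, yA} ^ 2 = Ideal.span {xA} ∧
      Ideal.span {xA - cA, yA} * Ideal.span {xA, yA} = Ideal.span {yA} := by
  intro x y A xA yA cA
  have hq0 : q ≠ 0 := by rw [← hq]; exact Fintype.card_ne_zero
  have hζ0 : ζ ≠ 0 := by rintro rfl; exact hζ (by simp [zero_pow hq0])
  have hb0 : b ≠ 0 := by
    intro h
    rw [h, map_zero] at hb
    exact pow_ne_zero _ hζ0 hb.symm
  set aA : A := algebraMap Fq A a with haAdef
  set bA : A := algebraMap Fq A b with hbAdef
  have haA : (aA : RatFunc Fq) = RatFunc.C a := rfl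
  have hbA : (bA : RatFunc Fq) = RatFunc.C b := rfl
  have hcA : (cA : RatFunc Fq) = RatFunc.C b⁻¹ := rfl
  -- key identities in A
  have id1 : xA = yA * yA - aA * (xA * yA) + bA * (xA * xA) :=
    Subtype.ext (L2 a b)
  have id2 : yA * yA = xA * (1 + aA * yA - bA * xA) := by
    apply Subtype.ext
    push_cast [haA, hbA]
    exact L1 a b
  have id3 : (xA - cA) * xA = yA * (cA * (aA * xA - yA)) :=
    Subtype.ext (L3 a b hb0)
  have id4 : yA = bA * (yA * xA) - bA * ((xA - cA) * yA) :=
    Subtype.ext (L4 a b hb0)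
  constructor
  · rw [sq, Ideal.span_pair_mul_span_pair]
    apply le_antisymm
    · rw [Ideal.span_le]
      rintro z hz
      simp only [Set.mem_insert_iff, Set.mem_singleton_iff] at hz
      rcases hz with rfl | rfl | rfl | rfl
      · exact Ideal.mem_span_singleton.2 (dvd_mul_right _ _)
      · exact Ideal.mem_span_singleton.2 (dvd_mul_right _ _)
      · exact Ideal.mem_span_singleton.2 (dvd_mul_left _ _)
      · exact Ideal.mem_span_singleton.2 ⟨1 + aA * yA - bA * xA, id2⟩
    · rw [Ideal.span_le, Set.singleton_subset_iff, SetLike.mem_coe]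
      have hmem : yA * yA - aA * (xA * yA) + bA * (xA * xA) ∈
          Ideal.span {xA * xA, xA * yA, yA * xA, yA * yA} := by
        refine add_mem (sub_mem (Ideal.subset_span ?_) (Ideal.mul_mem_left _ _ (Ideal.subset_span ?_))) (Ideal.mul_mem_left _ _ (Ideal.subset_span ?_))
        · exact Set.mem_insert_of_mem _ (Set.mem_insert_of_mem _ (Set.mem_insert_of_mem _ rfl))
        · exact Set.mem_insert_of_mem _ (Set.mem_insert _ _)
        · exact Set.mem_insert _ _
      rwa [← id1] at hmem
  · rw [Ideal.span_pair_mul_span_pair]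
    apply le_antisymm
    · rw [Ideal.span_le]
      rintro z hz
      simp only [Set.mem_insert_iff, Set.mem_singleton_iff] at hz
      rcases hz with rfl | rfl | rfl | rfl
      · exact Ideal.mem_span_singleton.2 ⟨cA * (aA * xA - yA), id3⟩
      · exact Ideal.mem_span_singleton.2 (dvd_mul_left _ _)
      · exact Ideal.mem_span_singleton.2 (dvd_mul_right _ _)
      · exact Ideal.mem_span_singleton.2 (dvd_mul_right _ _)
    · rw [Ideal.span_le, Set.singleton_subset_iff, SetLike.mem_coe]
      have hmem : bA * (yA * xA) - bA * ((xA - cA) * yA) ∈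
          Ideal.span {(xA - cA) * xA, (xA - cA) * yA, yA * xA, yA * yA} := by
        refine sub_mem (Ideal.mul_mem_left _ _ (Ideal.subset_span ?_)) (Ideal.mul_mem_left _ _ (Ideal.subset_span ?_))
        · exact Set.mem_insert_of_mem _ (Set.mem_insert_of_mem _ (Set.mem_insert _ _))
        · exact Set.mem_insert_of_mem _ (Set.mem_insert _ _)
      rwa [← id4] at hmem
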